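/- Let A → B and A → C be étale homomorphisms of commutative rings, and let g : B → C be any A-algebra homomorphism. Then g is étale. -/

import Mathlib

universe u

open Algebra

theorem formallyEtale_of_tower (A B C : Type u) [CommRing A] [CommRing B] [CommRing C]
    [Algebra A B] [Algebra A C] [Algebra B C] [IsScalarTower A B C]
    [Algebra.FormallyUnramified A B] [Algebra.FormallyEtale A C] :
    Algebra.FormallyEtale B C := by
  rw [Algebra.FormallyEtale.iff_comp_bijective]
  intro R _ _ I hI
  letI : Algebra A R := ((algebraMap B R).comp (algebraMap A B)).toAlgebra
  haveI : IsScalarTower A B R := IsScalarTower.of_algebraMap_eq' rfl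
  constructor
  · intro f₁ f₂ e
    have : FormallyUnramified A C := inferInstance
    have h : (Ideal.Quotient.mkₐ A I).comp (f₁.restrictScalars A)
        = (Ideal.Quotient.mkₐ A I).comp (f₂.restrictScalars A) := by
      ext x
      exact AlgHom.congr_fun e x
    have := Algebra.FormallyUnramified.comp_injective (R := A) (A := C) I hI h
    ext x
    exact AlgHom.congr_fun this x
  · intro f
    obtain ⟨ψ, hψ⟩ := Algebra.FormallyEtale.comp_bijective (R := A) (A := C) I hI
      |>.2 (f.restrictScalars A)
    have hB : ψ.comp (IsScalarTower.toAlgHom A B C) = IsScalarTower.toAlgHom A B R := by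
      apply Algebra.FormallyUnramified.comp_injective (R := A) (A := B) I hI
      ext b
      have := AlgHom.congr_fun hψ (algebraMap B C b)
      show Ideal.Quotient.mk I (ψ (algebraMap B C b)) = Ideal.Quotient.mk I (algebraMap B R b)
      simp only [AlgHom.comp_apply, Ideal.Quotient.mkₐ_eq_mk, AlgHom.coe_restrictScalars] at this
      rw [this]
      show f (algebraMap B C b) = _
      rw [AlgHom.commutes]
      rfl
    refine ⟨⟨ψ.toRingHom, fun b => AlgHom.congr_fun hB b⟩, ?_⟩
    ext x
    exact AlgHom.congr_fun hψ x


/-- If `B` and `C` are étale commutative `A`-algebras, then any `A`-algebra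
homomorphism `g : B → C` is étale (i.e. `C` is étale as a `B`-algebra via `g`). -/
theorem stmt_11 (A B C : Type u) [CommRing A] [CommRing B] [CommRing C]
    [Algebra A B] [Algebra A C] [Algebra.Etale A B] [Algebra.Etale A C]
    (g : B →ₐ[A] C) :
    letI : Algebra B C := g.toRingHom.toAlgebra
    Algebra.Etale B C := by
  letI : Algebra B C := g.toRingHom.toAlgebra
  haveI : IsScalarTower A B C := IsScalarTower.of_algebraMap_eq' (by ext x; exact (g.commutes x).symm)
  refine ⟨formallyEtale_of_tower A B C, ?_⟩
  exact Algebra.FinitePresentation.of_restrict_scalars_finitePresentation A B C
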